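/- arXiv:1609.03690 — 6 statements merged into one kernel-verified Lean document; each statement's English description precedes it below -/
import Mathlib

section
/- Let G be a finite group, H a subgroup of G of index 2, and x an element of G not in H. Let φ : H → (Fin n → ZMod 2) be a Gray map. Define φ̂ : G → (Fin (2n) → ZMod 2) by φ̂(g) = (φ(g) | φ(g)) if g ∈ H, and φ̂(g) = (φ(x⁻¹g) | φ(x⁻¹g) + 𝟏) if g ∉ H, where 𝟏 is the all-ones vector of length n and ( · | · ) denotes concatenation. Then for all g ∈ G, w_H(φ̂(g)) = w_H(φ̂(g⁻¹)). -/
/-- A map `φ : G → (Fin n → ZMod 2)` is a Gray map if `d_φ(a,b) = w_H(φ(a b⁻¹))` is a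
metric on `G` and moreover `d_φ(a,b) = d_H(φ a, φ b)` for all `a b`. -/
def IsGrayMap {G : Type*} [Group G] {n : ℕ} (φ : G → (Fin n → ZMod 2)) : Prop :=
  (∀ a b : G, hammingNorm (φ (a * b⁻¹)) = 0 ↔ a = b) ∧
  (∀ a b : G, hammingNorm (φ (a * b⁻¹)) = hammingNorm (φ (b * a⁻¹))) ∧
  (∀ a b c : G, hammingNorm (φ (a * c⁻¹)) ≤
      hammingNorm (φ (a * b⁻¹)) + hammingNorm (φ (b * c⁻¹))) ∧
  (∀ a b : G, hammingNorm (φ (a * b⁻¹)) = hammingDist (φ a) (φ b))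

lemma hn_sum {n : ℕ} (f : Fin n → ZMod 2) :
    hammingNorm f = ∑ i, if f i ≠ 0 then 1 else 0 := by
  simp [hammingNorm, Finset.card_filter]

lemma hn_append {n : ℕ} (u v : Fin n → ZMod 2) :
    hammingNorm (fun i : Fin (2 * n) => Fin.append u v (Fin.cast (two_mul n) i)) =
      hammingNorm u + hammingNorm v := by
  rw [hn_sum, hn_sum, hn_sum]
  have heq := Fintype.sum_equiv (finCongr (two_mul n))
      (fun i : Fin (2 * n) => if Fin.append u v (Fin.cast (two_mul n) i) ≠ 0 then (1:ℕ) else 0)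
      (fun j : Fin (n + n) => if Fin.append u v j ≠ 0 then 1 else 0) (fun i => rfl)
  rw [heq, Fin.sum_univ_add]
  simp only [Fin.append_left, Fin.append_right]

lemma hn_append_flip {n : ℕ} (u : Fin n → ZMod 2) :
    hammingNorm (fun i : Fin (2 * n) => Fin.append u (u + 1) (Fin.cast (two_mul n) i)) = n := by
  rw [hn_sum]
  have heq := Fintype.sum_equiv (finCongr (two_mul n))
      (fun i : Fin (2 * n) => if Fin.append u (u + 1) (Fin.cast (two_mul n) i) ≠ 0 then (1:ℕ) else 0)
      (fun j : Fin (n + n) => if Fin.append u (u + 1) j ≠ 0 then 1 else 0) (fun i => rfl)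
  rw [heq, Fin.sum_univ_add]
  simp only [Fin.append_left, Fin.append_right]
  rw [← Finset.sum_add_distrib]
  have key : ∀ i : Fin n,
      ((if (u i : ZMod 2) = 0 then 0 else 1) : ℕ) + (if (u i + 1 : ZMod 2) = 0 then 0 else 1) = 1 := by
    intro i
    rcases (by decide : ∀ a : ZMod 2, a = 0 ∨ a = 1) (u i) with h | h <;>
      simp [h] <;> decide
  simp only [ne_eq, ite_not, Pi.add_apply, Pi.one_apply]
  rw [Finset.sum_congr rfl (fun i _ => key i)]
  simp

/-- Lemma 2: for the Type 1 map `φ̂`, `w_H(φ̂ g) = w_H(φ̂ g⁻¹)` for all `g`. -/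
theorem stmt1 {G : Type*} [Group G] [Finite G] (H : Subgroup G) (hH : H.index = 2)
    (x : G) (hx : x ∉ H) {n : ℕ} (φ : H → (Fin n → ZMod 2)) (hφ : IsGrayMap φ)
    (φhat : G → (Fin (2 * n) → ZMod 2))
    (hmem : ∀ (g : G) (hg : g ∈ H),
      φhat g = fun i => Fin.append (φ ⟨g, hg⟩) (φ ⟨g, hg⟩) (Fin.cast (two_mul n) i))
    (hnmem : ∀ (g : G), g ∉ H → ∀ (hg : x⁻¹ * g ∈ H),
      φhat g = fun i =>
        Fin.append (φ ⟨x⁻¹ * g, hg⟩) (φ ⟨x⁻¹ * g, hg⟩ + 1) (Fin.cast (two_mul n) i)) :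
    ∀ g : G, hammingNorm (φhat g) = hammingNorm (φhat g⁻¹) := by
  have hsymm : ∀ h : H, hammingNorm (φ h) = hammingNorm (φ h⁻¹) := by
    intro h
    have := hφ.2.1 h 1
    simpa using this
  intro g
  by_cases hg : g ∈ H
  · rw [hmem g hg, hmem g⁻¹ (inv_mem hg), hn_append, hn_append]
    have : (⟨g⁻¹, inv_mem hg⟩ : H) = (⟨g, hg⟩ : H)⁻¹ := rfl
    rw [this, ← hsymm]
  · have hginv : g⁻¹ ∉ H := fun h => hg (by simpa using H.inv_mem h)
    have hxi : x⁻¹ ∉ H := fun h => hx (by simpa using H.inv_mem h)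
    have h1 : x⁻¹ * g ∈ H := by
      rw [Subgroup.mul_mem_iff_of_index_two hH]
      simp [hg, hxi]
    have h2 : x⁻¹ * g⁻¹ ∈ H := by
      rw [Subgroup.mul_mem_iff_of_index_two hH]
      simp [hginv, hxi]
    rw [hnmem g hg h1, hnmem g⁻¹ hginv h2, hn_append_flip, hn_append_flip]
end

section
/- Let G be a finite group, H a subgroup of G of index 2, and x an element of G not in H. Let φ : H → (Fin n → ZMod 2) be a Gray map. Define φ̂ : G → (Fin (2n) → ZMod 2) by φ̂(g) = (φ(g) | φ(g)) if g ∈ H, and φ̂(g) = (φ(x⁻¹g) | φ(x⁻¹g) + 𝟏) if g ∉ H, where 𝟏 is the all-ones vector of length n and ( · | · ) denotes concatenation. Then for all a, b ∈ G, w_H(φ̂(a·b)) ≤ w_H(φ̂(a)) + w_H(φ̂(b)). -/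
lemma norm_append {n : ℕ} (u w : Fin n → ZMod 2) :
    hammingNorm (fun i : Fin (2 * n) => Fin.append u w (Fin.cast (two_mul n) i)) =
      hammingNorm u + hammingNorm w := by
  have h1 : hammingNorm (fun i : Fin (2 * n) => Fin.append u w (Fin.cast (two_mul n) i)) =
      hammingNorm (Fin.append u w) := by
    simp only [hammingNorm]
    exact Finset.card_nbij (fun i => Fin.cast (two_mul n) i)
      (by intro i hi; simpa using hi) (by intro a _ b _ h; exact (finCongr (two_mul n)).injective h)
      (by intro b hb; exact ⟨Fin.cast (two_mul n).symm b, by simpa using hb, rfl⟩)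
  rw [h1]
  simp only [hammingNorm, Finset.card_filter]
  rw [Fin.sum_univ_add]
  simp only [Fin.append_left, Fin.append_right]

lemma norm_add_one {n : ℕ} (v : Fin n → ZMod 2) :
    hammingNorm v + hammingNorm (v + 1) = n := by
  have key : ∀ a : ZMod 2, (a + 1 ≠ 0) ↔ ¬(a ≠ 0) := by decide
  simp only [hammingNorm, Pi.add_apply, Pi.one_apply]
  simp_rw [key]
  rw [Finset.card_filter_add_card_filter_not]
  simp

/-- Lemma 3: for the Type 1 map `φ̂`,
`w_H(φ̂ (a*b)) ≤ w_H(φ̂ a) + w_H(φ̂ b)` for all `a b`. -/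
theorem stmt2 {G : Type*} [Group G] [Finite G] (H : Subgroup G) (hH : H.index = 2)
    (x : G) (hx : x ∉ H) {n : ℕ} (φ : H → (Fin n → ZMod 2)) (hφ : IsGrayMap φ)
    (φhat : G → (Fin (2 * n) → ZMod 2))
    (hmem : ∀ (g : G) (hg : g ∈ H),
      φhat g = fun i => Fin.append (φ ⟨g, hg⟩) (φ ⟨g, hg⟩) (Fin.cast (two_mul n) i))
    (hnmem : ∀ (g : G), g ∉ H → ∀ (hg : x⁻¹ * g ∈ H),
      φhat g = fun i =>
        Fin.append (φ ⟨x⁻¹ * g, hg⟩) (φ ⟨x⁻¹ * g, hg⟩ + 1) (Fin.cast (two_mul n) i)) :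
    ∀ a b : G, hammingNorm (φhat (a * b)) ≤ hammingNorm (φhat a) + hammingNorm (φhat b) := by
  have hxinv : x⁻¹ ∉ H := fun h => hx (by simpa using inv_mem h)
  have hmul : ∀ {a b : G}, a * b ∈ H ↔ (a ∈ H ↔ b ∈ H) :=
    fun {a b} => Subgroup.mul_mem_iff_of_index_two hH
  have sub : ∀ h k : H, hammingNorm (φ (h * k)) ≤ hammingNorm (φ h) + hammingNorm (φ k) := by
    intro h k
    have := hφ.2.2.1 (h * k) k 1
    simpa using this
  have hle : ∀ h : H, hammingNorm (φ h) ≤ n := fun h => by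
    simpa using (hammingNorm_le_card_fintype (x := φ h))
  intro a b
  by_cases ha : a ∈ H <;> by_cases hb : b ∈ H
  · have hab : a * b ∈ H := mul_mem ha hb
    rw [hmem _ hab, hmem _ ha, hmem _ hb, norm_append, norm_append, norm_append]
    have h2 : (⟨a * b, hab⟩ : H) = ⟨a, ha⟩ * ⟨b, hb⟩ := rfl
    have := sub ⟨a, ha⟩ ⟨b, hb⟩
    rw [← h2] at this
    omega
  · have hab : a * b ∉ H := fun h => hb ((hmul.1 h).1 ha)
    have hg : x⁻¹ * (a * b) ∈ H := hmul.2 (iff_of_false hxinv hab)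
    have hgb : x⁻¹ * b ∈ H := hmul.2 (iff_of_false hxinv hb)
    rw [hnmem _ hab hg, hmem _ ha, hnmem _ hb hgb, norm_append, norm_append, norm_append]
    have h1 := norm_add_one (φ ⟨x⁻¹ * (a * b), hg⟩)
    have h2 := norm_add_one (φ ⟨x⁻¹ * b, hgb⟩)
    omega
  · have hab : a * b ∉ H := fun h => ha ((hmul.1 h).2 hb)
    have hg : x⁻¹ * (a * b) ∈ H := hmul.2 (iff_of_false hxinv hab)
    have hga : x⁻¹ * a ∈ H := hmul.2 (iff_of_false hxinv ha)
    rw [hnmem _ hab hg, hnmem _ ha hga, hmem _ hb, norm_append, norm_append, norm_append]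
    have h1 := norm_add_one (φ ⟨x⁻¹ * (a * b), hg⟩)
    have h2 := norm_add_one (φ ⟨x⁻¹ * a, hga⟩)
    omega
  · have hab : a * b ∈ H := hmul.2 (iff_of_false ha hb)
    have hga : x⁻¹ * a ∈ H := hmul.2 (iff_of_false hxinv ha)
    have hgb : x⁻¹ * b ∈ H := hmul.2 (iff_of_false hxinv hb)
    rw [hmem _ hab, hnmem _ ha hga, hnmem _ hb hgb, norm_append, norm_append, norm_append]
    have h1 := norm_add_one (φ ⟨x⁻¹ * a, hga⟩)
    have h2 := norm_add_one (φ ⟨x⁻¹ * b, hgb⟩)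
    have h3 := hle ⟨a * b, hab⟩
    omega
end

section
/- The map φ : ZMod 8 → (Fin 4 → ZMod 2) defined by φ(0) = 0000, φ(1) = 0011, φ(2) = 0101, φ(3) = 0110, φ(4) = 1111, φ(5) = 1100, φ(6) = 1010, φ(7) = 1001 is a Gray map on the cyclic group C₈ = ZMod 8. -/
/-- A map `φ : G → (Fin n → ZMod 2)` on an additive group is a Gray map if
`d_φ(a,b) = w_H(φ (a - b))` is a metric on `G` and `d_φ(a,b) = d_H(φ a, φ b)`. -/
def IsAddGrayMap {G : Type*} [AddGroup G] {n : ℕ} (φ : G → (Fin n → ZMod 2)) : Prop :=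
  (∀ a b : G, hammingNorm (φ (a - b)) = 0 ↔ a = b) ∧
  (∀ a b : G, hammingNorm (φ (a - b)) = hammingNorm (φ (b - a))) ∧
  (∀ a b c : G, hammingNorm (φ (a - c)) ≤
      hammingNorm (φ (a - b)) + hammingNorm (φ (b - c))) ∧
  (∀ a b : G, hammingNorm (φ (a - b)) = hammingDist (φ a) (φ b))

/-- The Gray map on `C₈ = ZMod 8`: `0 ↦ 0000, 1 ↦ 0011, 2 ↦ 0101, 3 ↦ 0110,
4 ↦ 1111, 5 ↦ 1100, 6 ↦ 1010, 7 ↦ 1001`. -/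
def phiC8 (i : ZMod 8) : Fin 4 → ZMod 2 :=
  if i = 0 then ![0, 0, 0, 0] else if i = 1 then ![0, 0, 1, 1]
  else if i = 2 then ![0, 1, 0, 1] else if i = 3 then ![0, 1, 1, 0]
  else if i = 4 then ![1, 1, 1, 1] else if i = 5 then ![1, 1, 0, 0]
  else if i = 6 then ![1, 0, 1, 0] else ![1, 0, 0, 1]

/-- Example 3.1: `φ` is a Gray map on `C₈ = ZMod 8`. -/
theorem stmt8 : IsAddGrayMap phiC8 := by
  unfold IsAddGrayMap phiC8; decide
end

section
/- Let G be a group of order 8 and let φ : G → (Fin 3 → ZMod 2) be an injective map such that w_H(φ(g)) = 0 if and only if g = e, and w_H(φ(g)) = w_H(φ(g⁻¹)) for all g ∈ G. Then G contains at least 3 elements of order 2. -/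
/-- An involution mapping a finset of odd cardinality into itself has a fixed point. -/
lemma aux_fixed_point {α : Type*} [DecidableEq α] (f : α → α)
    (hf : Function.Involutive f) :
    ∀ s : Finset α, (∀ a ∈ s, f a ∈ s) → Odd s.card → ∃ a ∈ s, f a = a := by
  intro s
  induction s using Finset.strongInduction with
  | _ s ih =>
    intro hmaps hodd
    rcases s.eq_empty_or_nonempty with rfl | ⟨a, ha⟩
    · simp at hodd
    by_cases hfa : f a = a
    · exact ⟨a, ha, hfa⟩
    · set t := s \ {a, f a} with ht
      have hfas : f a ∈ s := hmaps a ha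
      have htsub : t ⊂ s := by
        refine Finset.ssubset_iff_of_subset (Finset.sdiff_subset) |>.mpr ⟨a, ha, by simp [ht]⟩
      have hcard : s.card = t.card + 2 := by
        have : ({a, f a} : Finset α) ⊆ s := by
          intro x hx; simp at hx; rcases hx with rfl | rfl <;> assumption
        rw [ht, Finset.card_sdiff_of_subset this, Finset.card_insert_of_notMem (by simp [Ne.symm hfa]),
          Finset.card_singleton]
        have h2 : ({a, f a} : Finset α).card = 2 := by
          rw [Finset.card_insert_of_notMem (by simp [Ne.symm hfa]), Finset.card_singleton]
        have := Finset.card_le_card this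
        rw [h2] at this
        omega
      have htmaps : ∀ b ∈ t, f b ∈ t := by
        intro b hb
        rw [ht, Finset.mem_sdiff] at hb ⊢
        obtain ⟨hbs, hbn⟩ := hb
        simp only [Finset.mem_insert, Finset.mem_singleton] at hbn ⊢
        refine ⟨hmaps b hbs, ?_⟩
        push_neg at hbn ⊢
        constructor
        · intro h; exact hbn.2 (by rw [← h, hf])
        · intro h; exact hbn.1 (hf.injective h)
      have htodd : Odd t.card := by
        rcases hodd with ⟨k, hk⟩
        exact ⟨k - 1, by omega⟩
      obtain ⟨b, hb, hfb⟩ := ih t htsub htmaps htodd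
      exact ⟨b, (Finset.sdiff_subset) hb, hfb⟩

/-- if `G` has order 8 and `φ : G → (Fin 3 → ZMod 2)` is injective with
`w_H(φ g) = 0 ↔ g = e` and `w_H(φ g) = w_H(φ g⁻¹)` for all `g`, then `G` contains at
least 3 elements of order 2. -/
theorem stmt11 {G : Type*} [Group G] [Fintype G] (hG : Fintype.card G = 8)
    (φ : G → (Fin 3 → ZMod 2)) (hinj : Function.Injective φ)
    (h0 : ∀ g : G, hammingNorm (φ g) = 0 ↔ g = 1)
    (hinv : ∀ g : G, hammingNorm (φ g) = hammingNorm (φ g⁻¹)) :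
    3 ≤ {g : G | g ≠ 1 ∧ g * g = 1}.ncard := by
  classical
  have hbij : Function.Bijective φ := by
    rw [Fintype.bijective_iff_injective_and_card]
    exact ⟨hinj, by rw [hG]; simp [ZMod.card]⟩
  -- the weight-k level sets of φ have the same card as the corresponding vector sets
  have hcard : ∀ k : ℕ,
      (Finset.univ.filter fun g : G => hammingNorm (φ g) = k).card =
      (Finset.univ.filter fun v : Fin 3 → ZMod 2 => hammingNorm v = k).card := by
    intro k
    rw [← Finset.card_image_of_injective _ hinj]
    congr 1
    ext v
    simp only [Finset.mem_image, Finset.mem_filter, Finset.mem_univ, true_and]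
    constructor
    · rintro ⟨g, hg, rfl⟩; exact hg
    · intro hv
      obtain ⟨g, rfl⟩ := hbij.surjective v
      exact ⟨g, hv, rfl⟩
  have hc1 : (Finset.univ.filter fun g : G => hammingNorm (φ g) = 1).card = 3 := by
    rw [hcard]; decide
  have hc2 : (Finset.univ.filter fun g : G => hammingNorm (φ g) = 2).card = 3 := by
    rw [hcard]; decide
  have hc3 : (Finset.univ.filter fun g : G => hammingNorm (φ g) = 3).card = 1 := by
    rw [hcard]; decide
  have hfinv : Function.Involutive (fun g : G => g⁻¹) := fun g => inv_inv g
  have key : ∀ k : ℕ, Odd (Finset.univ.filter fun g : G => hammingNorm (φ g) = k).card →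
      ∃ g : G, hammingNorm (φ g) = k ∧ g⁻¹ = g := by
    intro k hodd
    obtain ⟨g, hg, hfg⟩ := aux_fixed_point (fun g : G => g⁻¹) hfinv _
      (by intro a ha; simp only [Finset.mem_filter, Finset.mem_univ, true_and] at ha ⊢
          rw [← hinv]; exact ha) hodd
    simp only [Finset.mem_filter, Finset.mem_univ, true_and] at hg
    exact ⟨g, hg, hfg⟩
  obtain ⟨g1, hw1, hi1⟩ := key 1 (by rw [hc1]; decide)
  obtain ⟨g2, hw2, hi2⟩ := key 2 (by rw [hc2]; decide)
  obtain ⟨g3, hw3, hi3⟩ := key 3 (by rw [hc3]; decide)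
  have hmem : ∀ (g : G) (k : ℕ), hammingNorm (φ g) = k → k ≠ 0 → g⁻¹ = g →
      g ∈ {g : G | g ≠ 1 ∧ g * g = 1} := by
    intro g k hw hk hi
    refine ⟨fun h => hk (by rw [← hw, h0]; exact h), ?_⟩
    nth_rewrite 1 [← hi]
    exact inv_mul_cancel g
  have h1 := hmem g1 1 hw1 one_ne_zero hi1
  have h2 := hmem g2 2 hw2 two_ne_zero hi2
  have h3 := hmem g3 3 hw3 three_ne_zero hi3
  have h12 : g1 ≠ g2 := fun h => by rw [h, hw2] at hw1; omega
  have h13 : g1 ≠ g3 := fun h => by rw [h, hw3] at hw1; omega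
  have h23 : g2 ≠ g3 := fun h => by rw [h, hw3] at hw2; omega
  have hsub : ({g1, g2, g3} : Set G) ⊆ {g : G | g ≠ 1 ∧ g * g = 1} := by
    intro x hx
    rcases hx with rfl | rfl | rfl <;> assumption
  calc (3 : ℕ) = ({g1, g2, g3} : Set G).ncard := by
        rw [Set.ncard_insert_of_notMem (by simp [h12, h13]) (Set.toFinite _),
          Set.ncard_insert_of_notMem (by simp [h23]) (Set.toFinite _), Set.ncard_singleton]
    _ ≤ _ := Set.ncard_le_ncard hsub (Set.toFinite _)
end

section
/- There is no Gray map from the cyclic group C₈ = ZMod 8 to (Fin 3 → ZMod 2); that is, no map φ : ZMod 8 → (Fin 3 → ZMod 2) satisfies the Gray map conditions. -/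
lemma cube_antipode (u : Fin 3 → ZMod 2) :
    hammingDist u (u + fun _ => 1) = 3 := by revert u; decide

lemma cube_unique (u v w : Fin 3 → ZMod 2) (h1 : hammingDist u v = 3)
    (h2 : hammingDist u w = 3) : v = w := by revert u v w; decide

lemma cube_split (u v t : Fin 3 → ZMod 2) (h : hammingDist u v = 3) :
    hammingDist t u + hammingDist t v = 3 := by revert u v t; decide

/-- there is no Gray map from `C₈ = ZMod 8` to `Fin 3 → ZMod 2`. -/
theorem stmt12 : ∀ φ : ZMod 8 → (Fin 3 → ZMod 2), ¬ IsAddGrayMap φ := by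
  intro φ ⟨h0, hsym, _, hdist⟩
  -- φ is injective
  have hinj : Function.Injective φ := by
    intro a b hab
    have := (hdist a b).symm
    rw [hab, hammingDist_self] at this
    exact (h0 a b).mp this.symm
  have hbij : Function.Bijective φ := by
    have : Fintype.card (ZMod 8) = Fintype.card (Fin 3 → ZMod 2) := by decide
    exact (Fintype.bijective_iff_injective_and_card φ).mpr ⟨hinj, this⟩
  -- get x with φ x the antipode of φ 0
  obtain ⟨x, hx⟩ := hbij.2 (φ 0 + fun _ => 1)
  have hx3 : hammingDist (φ 0) (φ x) = 3 := by rw [hx]; exact cube_antipode _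
  -- w(x) = 3, and w(-x) = 3, so φ(-x) = φ x, so x = -x
  have hwx : hammingNorm (φ (x - 0)) = 3 := by rw [hdist, hammingDist_comm]; exact hx3
  have hwnx : hammingDist (φ 0) (φ (-x)) = 3 := by
    have h' : hammingNorm (φ (-x - 0)) = 3 := by
      have e : -x - 0 = 0 - x := by ring
      rw [e, ← hsym x 0]; exact hwx
    rw [hdist] at h'
    rw [hammingDist_comm]; exact h'
  have hxnx : x = -x := hinj (cube_unique _ _ _ hx3 hwnx)
  have hx0 : x ≠ 0 := by
    intro h
    rw [h, hammingDist_self] at hx3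
    omega
  have hx4 : x = 4 := by
    have key : ∀ y : ZMod 8, y = -y → y ≠ 0 → y = 4 := by decide
    exact key x hxnx hx0
  -- now d(φ2, φ0) = w(2) and d(φ2, φ4) = w(-2) = w(2), but they sum to 3
  have h1 : hammingNorm (φ (2 - (0:ZMod 8))) = hammingDist (φ 2) (φ 0) := hdist 2 0
  have h2 : hammingNorm (φ (2 - (4:ZMod 8))) = hammingDist (φ 2) (φ 4) := hdist 2 4
  have h3 : hammingNorm (φ ((2:ZMod 8) - 4)) = hammingNorm (φ ((2:ZMod 8) - 0)) := by
    have e1 : (2:ZMod 8) - 4 = 0 - 2 := by decide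
    have e2 : (2:ZMod 8) - 0 = 2 - 0 := rfl
    rw [e1]
    exact (hsym 0 2).trans (by norm_num)
  have hsplit := cube_split (φ 0) (φ 4) (φ 2) (hx4 ▸ hx3)
  omega
end

section
/- There is no Gray map from the quaternion group Q₈ (QuaternionGroup 2 in Mathlib) to (Fin 3 → ZMod 2); that is, no map φ : Q₈ → (Fin 3 → ZMod 2) satisfies the Gray map conditions. -/
/-- there is no Gray map from the quaternion group
`Q₈ = QuaternionGroup 2` to `Fin 3 → ZMod 2`. -/
theorem stmt13 : ∀ φ : QuaternionGroup 2 → (Fin 3 → ZMod 2), ¬ IsGrayMap φ := by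
  rintro φ ⟨h0, hsym, -, hdist⟩
  -- parity lemma: Hamming distance mod 2 is the sum of the Hamming norms mod 2
  have parity : ∀ u v : Fin 3 → ZMod 2,
      ((hammingDist u v : ZMod 2)) = (hammingNorm u : ZMod 2) + (hammingNorm v : ZMod 2) := by
    decide
  set f : QuaternionGroup 2 → ZMod 2 := fun g => (hammingNorm (φ g) : ZMod 2) with hf
  have f1 : f 1 = 0 := by
    have := (h0 1 1).mpr rfl
    simp at this
    simp [hf, this]
  have hfab : ∀ a b : QuaternionGroup 2, f (a * b⁻¹) = f a + f b := by
    intro a b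
    have := hdist a b
    simp only [hf]
    rw [this, parity]
  have hinv : ∀ y : QuaternionGroup 2, f y⁻¹ = f y := by
    intro y
    have := hfab 1 y
    simpa [f1] using this
  -- `f` is a homomorphism into `ZMod 2`
  have hom : ∀ x y : QuaternionGroup 2, f (x * y) = f x + f y := by
    intro x y
    have := hfab x y⁻¹
    simpa [hinv] using this
  -- φ is bijective
  have hinj : Function.Injective φ := by
    intro a b hab
    have : hammingNorm (φ (a * b⁻¹)) = 0 := by
      rw [hdist a b, hab, hammingDist_self]
    exact (h0 a b).mp this
  have hbij : Function.Bijective φ := by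
    rw [Fintype.bijective_iff_injective_and_card]
    refine ⟨hinj, ?_⟩
    rw [QuaternionGroup.card]
    simp
  obtain ⟨g₀, hg₀⟩ := hbij.2 (fun _ => 1)
  have w3 : hammingNorm (φ g₀) = 3 := by
    rw [hg₀]; decide
  -- g₀⁻¹ also maps to the all-ones vector
  have winv : hammingNorm (φ g₀⁻¹) = 3 := by
    have := hsym g₀ 1
    simp at this
    omega
  have uniq3 : ∀ v : Fin 3 → ZMod 2, hammingNorm v = 3 → v = fun _ => 1 := by decide
  have : g₀⁻¹ = g₀ := hinj (by rw [uniq3 _ winv, hg₀])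
  have hsq : g₀ * g₀ = 1 := by
    nth_rewrite 1 [← this]; simp
  have hne : g₀ ≠ 1 := by
    intro h
    have t := (h0 1 1).mpr rfl
    rw [inv_one, mul_one, ← h, w3] at t
    omega
  -- the unique involution of Q₈ is a square
  have key : ∀ g : QuaternionGroup 2, g * g = 1 → g ≠ 1 →
      g = QuaternionGroup.a 1 * QuaternionGroup.a 1 := by decide
  have h1 : f g₀ = 1 := by simp only [hf, w3]; decide
  have h2 : f g₀ = 0 := by
    rw [key g₀ hsq hne, hom]
    exact CharTwo.add_self_eq_zero _
  rw [h1] at h2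
  exact one_ne_zero h2
end
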